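/- For n = 3 and dominant λ = (λ_1,λ_2,λ_3) ∈ ℤ^3, the number of integer points in FFLV(λ) equals the dimension of the irreducible GL_3 representation of highest weight λ, namely ((λ_1−λ_2+1)(λ_2−λ_3+1)(λ_1−λ_3+2))/2. -/

import Mathlib

open Finset

private lemma icc_succ_int (a : ℤ) (h : 0 ≤ a) :
    Finset.Icc 0 (a + 1) = insert (a + 1) (Finset.Icc 0 a) := by
  ext x; simp only [Finset.mem_Icc, Finset.mem_insert]; omega

private lemma gauss_int (a : ℤ) (h : 0 ≤ a) :
    (∑ x ∈ Finset.Icc (0 : ℤ) a, x) * 2 = a * (a + 1) := by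
  obtain ⟨m, rfl⟩ := Int.eq_ofNat_of_zero_le h
  clear h
  induction m with
  | zero => simp
  | succ m ih =>
    have hc : ((m + 1 : ℕ) : ℤ) = (m : ℤ) + 1 := by push_cast; ring
    rw [hc, icc_succ_int _ (by positivity),
      Finset.sum_insert (by simp only [Finset.mem_Icc]; omega), add_mul, ih]
    ring

theorem fflv3_lattice_point_count_is_weyl_dimension (l1 l2 l3 : ℤ)
    (h12 : l2 ≤ l1) (h23 : l3 ≤ l2) :
    ({u : ℤ × ℤ × ℤ | 0 ≤ u.1 ∧ u.1 ≤ l1 - l2 ∧ 0 ≤ u.2.2 ∧ u.2.2 ≤ l2 - l3 ∧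
        0 ≤ u.2.1 ∧ u.1 + u.2.1 + u.2.2 ≤ l1 - l3}.ncard : ℤ) =
      (l1 - l2 + 1) * (l2 - l3 + 1) * (l1 - l3 + 2) / 2 := by
  set a := l1 - l2 with ha
  set b := l2 - l3 with hb
  have ha0 : 0 ≤ a := by omega
  have hb0 : 0 ≤ b := by omega
  have hab : l1 - l3 = a + b := by omega
  rw [hab]
  set F : Finset (ℤ × ℤ × ℤ) :=
    (Finset.Icc 0 a ×ˢ Finset.Icc 0 (a + b) ×ˢ Finset.Icc 0 b).filter
      (fun u => u.1 + u.2.1 + u.2.2 ≤ a + b) with hF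
  have hset : {u : ℤ × ℤ × ℤ | 0 ≤ u.1 ∧ u.1 ≤ a ∧ 0 ≤ u.2.2 ∧ u.2.2 ≤ b ∧
      0 ≤ u.2.1 ∧ u.1 + u.2.1 + u.2.2 ≤ a + b} = ↑F := by
    ext u
    simp only [hF, Set.mem_setOf_eq, Finset.coe_filter, Finset.mem_product,
      Finset.mem_Icc]
    constructor
    · rintro ⟨h1, h2, h3, h4, h5, h6⟩; exact ⟨⟨⟨h1, h2⟩, ⟨h5, by omega⟩, h3, h4⟩, h6⟩
    · rintro ⟨⟨⟨h1, h2⟩, ⟨h5, _⟩, h3, h4⟩, h6⟩; exact ⟨h1, h2, h3, h4, h5, h6⟩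
  rw [hset, Set.ncard_coe_finset]
  set t : Finset (ℤ × ℤ) := Finset.Icc 0 a ×ˢ Finset.Icc 0 b with ht
  have hcard : F.card = ∑ p ∈ t, (a + b - p.1 - p.2 + 1).toNat := by
    rw [Finset.card_eq_sum_card_fiberwise (f := fun u => (u.1, u.2.2)) (t := t)
      (by intro u hu
          replace hu : u ∈ F := hu
          simp only [hF, Finset.mem_filter, Finset.mem_product, Finset.mem_Icc] at hu
          show (u.1, u.2.2) ∈ t
          simp only [ht, Finset.mem_product, Finset.mem_Icc]
          exact ⟨hu.1.1, hu.1.2.2⟩)]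
    refine Finset.sum_congr rfl fun p hp => ?_
    obtain ⟨p1, p2⟩ := p
    simp only [ht, Finset.mem_product, Finset.mem_Icc] at hp
    have hfib : F.filter (fun u => (u.1, u.2.2) = (p1, p2)) =
        (Finset.Icc 0 (a + b - p1 - p2)).map
          ⟨fun z => (p1, z, p2), by intro x y h; simpa [Prod.ext_iff] using h⟩ := by
      ext u
      obtain ⟨x, z, y⟩ := u
      simp only [hF, Finset.mem_filter, Finset.mem_product, Finset.mem_Icc,
        Finset.mem_map, Function.Embedding.coeFn_mk, Prod.mk.injEq]
      constructor
      · rintro ⟨⟨⟨⟨hx1, hx2⟩, ⟨hz1, hz2⟩, hy1, hy2⟩, hs⟩, rfl, rfl⟩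
        exact ⟨z, ⟨hz1, by omega⟩, rfl⟩
      · rintro ⟨z', ⟨hz1, hz2⟩, rfl, rfl, rfl⟩
        refine ⟨⟨⟨⟨?_, ?_⟩, ⟨?_, ?_⟩, ?_, ?_⟩, ?_⟩, rfl, rfl⟩ <;> omega
    rw [hfib, Finset.card_map, Int.card_Icc]
    congr 1; omega
  have hcast : (F.card : ℤ) = ∑ p ∈ t, (a + b - p.1 - p.2 + 1) := by
    rw [hcard, Nat.cast_sum]
    refine Finset.sum_congr rfl fun p hp => ?_
    simp only [ht, Finset.mem_product, Finset.mem_Icc] at hp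
    rw [Int.toNat_of_nonneg (by omega)]
  rw [hcast]
  have hTa := gauss_int a ha0
  have hTb := gauss_int b hb0
  have hS : (∑ p ∈ t, (a + b - p.1 - p.2 + 1)) * 2 = (a + 1) * (b + 1) * (a + b + 2) := by
    rw [ht, Finset.sum_product]
    have hcardb : ((Finset.Icc (0 : ℤ) b).card : ℤ) = b + 1 := by
      rw [Int.card_Icc, Int.toNat_of_nonneg (by omega)]; ring
    have hcarda : ((Finset.Icc (0 : ℤ) a).card : ℤ) = a + 1 := by
      rw [Int.card_Icc, Int.toNat_of_nonneg (by omega)]; ring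
    have inner : ∀ x : ℤ, (∑ y ∈ Finset.Icc (0 : ℤ) b, (a + b - x - y + 1)) =
        (b + 1) * (a + b - x + 1) - ∑ y ∈ Finset.Icc (0 : ℤ) b, y := by
      intro x
      calc (∑ y ∈ Finset.Icc (0 : ℤ) b, (a + b - x - y + 1))
          = ∑ y ∈ Finset.Icc (0 : ℤ) b, ((a + b - x + 1) - y) :=
            Finset.sum_congr rfl fun y _ => by ring
        _ = (b + 1) * (a + b - x + 1) - ∑ y ∈ Finset.Icc (0 : ℤ) b, y := by
            rw [Finset.sum_sub_distrib, Finset.sum_const, nsmul_eq_mul, hcardb]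
    calc (∑ x ∈ Finset.Icc (0 : ℤ) a, ∑ y ∈ Finset.Icc (0 : ℤ) b, (a + b - x - y + 1)) * 2
        = (∑ x ∈ Finset.Icc (0 : ℤ) a,
            (((b + 1) * (a + b + 1) - ∑ y ∈ Finset.Icc (0 : ℤ) b, y) - (b + 1) * x)) * 2 := by
          congr 1
          refine Finset.sum_congr rfl fun x _ => ?_
          rw [inner x]; ring
      _ = ((a + 1) * ((b + 1) * (a + b + 1) - ∑ y ∈ Finset.Icc (0 : ℤ) b, y)
            - (b + 1) * ∑ x ∈ Finset.Icc (0 : ℤ) a, x) * 2 := by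
          rw [Finset.sum_sub_distrib, Finset.sum_const, nsmul_eq_mul, hcarda,
            ← Finset.mul_sum]
      _ = (a + 1) * (b + 1) * (a + b + 2) := by
          linear_combination (-(a + 1)) * hTb + (-(b + 1)) * hTa
  rw [← hS, Int.mul_ediv_cancel _ (by norm_num)]
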